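/- arXiv:2404.04236 — 2 statements merged into one kernel-verified Lean document; each statement's English description precedes it below -/
import Mathlib

section
/- Let Q be an n×n Stieltjes matrix, π a permutation of [n], and z ∈ {0,1}^n with support S. Then the polymatroid inequality holds entrywise: (Q ∘ z z⊤)† ≤ Σ_{k=1}^n R(π_k; S_{k-1}^π) z_{π_k}, where R(π_k; S_{k-1}^π) = (Q∘e_{S_k^π}e_{S_k^π}⊤)† − (Q∘e_{S_{k-1}^π}e_{S_{k-1}^π}⊤)† and S_k^π = {π_1,…,π_k}. -/
open Matrix
open scoped Classical

/-- The Moore–Penrose pseudoinverse of a real square matrix, defined via its four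
characterizing equations (and `0` if no such matrix exists; by uniqueness of the
Moore–Penrose pseudoinverse, when it exists this definition picks it out). -/
noncomputable def pinv {m : Type*} [Fintype m] [DecidableEq m]
    (A : Matrix m m ℝ) : Matrix m m ℝ :=
  if h : ∃ B : Matrix m m ℝ,
      A * B * A = A ∧ B * A * B = B ∧ (A * B)ᵀ = A * B ∧ (B * A)ᵀ = B * A
  then h.choose else 0

/-- `Q ∘ e_S e_Sᵀ`: the matrix agreeing with `Q` on entries indexed by `S × S`,
and zero elsewhere. -/
def mask {n : ℕ} (Q : Matrix (Fin n) (Fin n) ℝ) (S : Finset (Fin n)) :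
    Matrix (Fin n) (Fin n) ℝ :=
  Matrix.of fun i j => if i ∈ S ∧ j ∈ S then Q i j else 0

/-- `S_k^π = {π_1, …, π_k}`, the image under the permutation `π` of the first `k`
positions (`S_0^π = ∅`). -/
def Sk {n : ℕ} (π : Equiv.Perm (Fin n)) (k : ℕ) : Finset (Fin n) :=
  (Finset.univ.filter fun i : Fin n => (i : ℕ) < k).image π

/-- `R(π_{k+1}; S_k^π)`: the increment of the restricted pseudoinverses along the chain. -/
noncomputable def Rinc {n : ℕ} (Q : Matrix (Fin n) (Fin n) ℝ) (π : Equiv.Perm (Fin n))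
    (k : ℕ) : Matrix (Fin n) (Fin n) ℝ :=
  pinv (mask Q (Sk π (k + 1))) - pinv (mask Q (Sk π k))


set_option linter.unusedSectionVars false
set_option maxHeartbeats 1000000

section Uniq
variable {m : Type*} [Fintype m] [DecidableEq m]

lemma mp_unique (A C D : Matrix m m ℝ)
    (hc1 : A * C * A = A) (hc2 : C * A * C = C) (hc3 : (A * C)ᵀ = A * C) (hc4 : (C * A)ᵀ = C * A)
    (hd1 : A * D * A = A) (hd2 : D * A * D = D) (hd3 : (A * D)ᵀ = A * D) (hd4 : (D * A)ᵀ = D * A) :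
    C = D := by
  have h1 : A * C = A * D := by
    calc A * C = (A * C)ᵀ := hc3.symm
    _ = ((A * D) * (A * C))ᵀ := by
        rw [show (A * D) * (A * C) = (A * D * A) * C by noncomm_ring, hd1]
    _ = (A * C)ᵀ * (A * D)ᵀ := by rw [transpose_mul]
    _ = (A * C) * (A * D) := by rw [hc3, hd3]
    _ = (A * C * A) * D := by noncomm_ring
    _ = A * D := by rw [hc1]
  have h2 : C * A = D * A := by
    calc C * A = (C * A)ᵀ := hc4.symm
    _ = ((C * A) * (D * A))ᵀ := by
        rw [show (C * A) * (D * A) = C * (A * D * A) by noncomm_ring, hd1]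
    _ = (D * A)ᵀ * (C * A)ᵀ := by rw [transpose_mul]
    _ = (D * A) * (C * A) := by rw [hc4, hd4]
    _ = D * (A * C * A) := by noncomm_ring
    _ = D * A := by rw [hc1]
  calc C = C * A * C := hc2.symm
  _ = C * (A * D) := by rw [mul_assoc, h1]
  _ = (D * A) * D := by rw [← mul_assoc, h2]
  _ = D := by rw [hd2]

lemma pinv_eq_of (A B : Matrix m m ℝ)
    (h1 : A * B * A = A) (h2 : B * A * B = B) (h3 : (A * B)ᵀ = A * B) (h4 : (B * A)ᵀ = B * A) :
    pinv A = B := by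
  have hex : ∃ C : Matrix m m ℝ,
      A * C * A = A ∧ C * A * C = C ∧ (A * C)ᵀ = A * C ∧ (C * A)ᵀ = C * A := ⟨B, h1, h2, h3, h4⟩
  rw [pinv, dif_pos hex]
  obtain ⟨g1, g2, g3, g4⟩ := hex.choose_spec
  exact mp_unique A _ B g1 g2 g3 g4 h1 h2 h3 h4

end Uniq

section Comb
variable {n : ℕ}

/-- Diagonal 0/1 matrix indicating membership in `T`. -/
noncomputable def Ed (T : Finset (Fin n)) : Matrix (Fin n) (Fin n) ℝ :=
  Matrix.diagonal fun i => if i ∈ T then (1 : ℝ) else 0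

lemma Ed_mul_Ed (T : Finset (Fin n)) : Ed T * Ed T = Ed T := by
  rw [Ed, diagonal_mul_diagonal]
  have : (fun i => (if i ∈ T then (1:ℝ) else 0) * if i ∈ T then (1:ℝ) else 0)
      = fun i => if i ∈ T then (1:ℝ) else 0 := by
    funext i; split_ifs <;> norm_num
  rw [this]

lemma Ed_nonneg (T : Finset (Fin n)) (i j : Fin n) : 0 ≤ Ed T i j := by
  rw [Ed, diagonal_apply]; split_ifs <;> norm_num

lemma Ed_le (S S' : Finset (Fin n)) (h : S ⊆ S') (i j : Fin n) : Ed S i j ≤ Ed S' i j := by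
  rw [Ed, Ed, diagonal_apply, diagonal_apply]
  by_cases hij : i = j
  · subst hij
    by_cases hS : i ∈ S
    · simp [hS, h hS]
    · by_cases hS' : i ∈ S' <;> simp [hS, hS']
  · simp [hij]

lemma Ed_insert (e : Fin n) (T : Finset (Fin n)) (he : e ∉ T) :
    Ed (insert e T) = Ed T + Ed {e} := by
  rw [Ed, Ed, Ed, diagonal_add]
  have : (fun i => if i ∈ insert e T then (1:ℝ) else 0)
      = fun i => (if i ∈ T then (1:ℝ) else 0) + if i ∈ ({e} : Finset (Fin n)) then (1:ℝ) else 0 := by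
    funext i
    by_cases hie : i = e
    · subst hie; simp [he]
    · by_cases hiT : i ∈ T <;> simp [hie, hiT]
  rw [this]

lemma mul_entry_nonneg {A B : Matrix (Fin n) (Fin n) ℝ}
    (hA : ∀ i j, 0 ≤ A i j) (hB : ∀ i j, 0 ≤ B i j) : ∀ i j, 0 ≤ (A * B) i j := by
  intro i j
  rw [Matrix.mul_apply]
  exact Finset.sum_nonneg fun m _ => mul_nonneg (hA _ _) (hB _ _)

lemma mul_entry_mono {A A' B B' : Matrix (Fin n) (Fin n) ℝ}
    (hA : ∀ i j, 0 ≤ A i j) (hB : ∀ i j, 0 ≤ B i j)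
    (hAA : ∀ i j, A i j ≤ A' i j) (hBB : ∀ i j, B i j ≤ B' i j) :
    ∀ i j, (A * B) i j ≤ (A' * B') i j := by
  intro i j
  rw [Matrix.mul_apply, Matrix.mul_apply]
  refine Finset.sum_le_sum fun m _ => ?_
  exact mul_le_mul (hAA _ _) (hBB _ _) (hB _ _) (le_trans (hA _ _) (hAA _ _))

/-- Alternating product `X(c 0) * M * X(c 1) * M * ⋯ * M * X(c k)` where `X b` is `f` if `b`
is true and `E` otherwise. -/
noncomputable def term (M E f : Matrix (Fin n) (Fin n) ℝ) :
    (k : ℕ) → (Fin (k + 1) → Bool) → Matrix (Fin n) (Fin n) ℝ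
  | 0, c => cond (c 0) f E
  | (k + 1), c => cond (c 0) f E * (M * term M E f k fun i => c i.succ)

lemma term_nonneg {M E f : Matrix (Fin n) (Fin n) ℝ}
    (hM : ∀ i j, 0 ≤ M i j) (hE : ∀ i j, 0 ≤ E i j) (hf : ∀ i j, 0 ≤ f i j) :
    ∀ k (c : Fin (k + 1) → Bool) i j, 0 ≤ term M E f k c i j := by
  intro k
  induction k with
  | zero => intro c i j; cases hc : c 0 <;> simp [term, hc] <;> [exact hE i j; exact hf i j]
  | succ k ih =>
      intro c i j
      refine mul_entry_nonneg (fun i j => ?_) (mul_entry_nonneg hM (ih _)) i j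
      cases hc : c 0 <;> simp [hc] <;> [exact hE i j; exact hf i j]

lemma term_mono {M E E' f : Matrix (Fin n) (Fin n) ℝ}
    (hM : ∀ i j, 0 ≤ M i j) (hE : ∀ i j, 0 ≤ E i j) (hf : ∀ i j, 0 ≤ f i j)
    (hEE : ∀ i j, E i j ≤ E' i j) :
    ∀ k (c : Fin (k + 1) → Bool) i j, term M E f k c i j ≤ term M E' f k c i j := by
  intro k
  induction k with
  | zero =>
      intro c i j; cases hc : c 0 <;> simp [term, hc]
      exact hEE i j
  | succ k ih =>
      intro c i j
      refine mul_entry_mono (fun i j => ?_) (mul_entry_nonneg hM (term_nonneg hM hE hf _ _))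
        (fun i j => ?_) (mul_entry_mono hM (term_nonneg hM hE hf _ _) (fun _ _ => le_refl _) (ih _)) i j
      · cases hc : c 0 <;> simp [hc] <;> [exact hE i j; exact hf i j]
      · cases hc : c 0 <;> simp [hc]
        exact hEE i j

/-- Expansion of the alternating power over all `E`/`f` choices. -/
lemma expand (M E f : Matrix (Fin n) (Fin n) ℝ) :
    ∀ k, (E + f) * (M * (E + f)) ^ k = ∑ c : Fin (k + 1) → Bool, term M E f k c := by
  intro k
  induction k with
  | zero =>
      rw [pow_zero, mul_one]
      rw [← Equiv.sum_comp (Equiv.funUnique (Fin 1) Bool).symm (fun c => term M E f 0 c)]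
      rw [Fintype.sum_bool]
      simp [term, Equiv.funUnique]
      exact add_comm E f
  | succ k ih =>
      have hL : (E + f) * (M * (E + f)) ^ (k + 1) =
          ∑ c : Fin (k + 1) → Bool, ((E + f) * (M * term M E f k c)) := by
        rw [pow_succ', mul_assoc M (E + f) ((M * (E + f)) ^ k), ih]
        simp only [Finset.mul_sum]
      rw [hL, ← Equiv.sum_comp (Fin.consEquiv fun _ : Fin (k + 2) => Bool)
        (fun c => term M E f (k + 1) c), Fintype.sum_prod_type_right]
      refine Finset.sum_congr rfl fun c _ => ?_
      rw [Fintype.sum_bool]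
      have h1 : ∀ b : Bool, (Fin.consEquiv fun _ : Fin (k + 2) => Bool) (b, c) = Fin.cons b c :=
        fun _ => rfl
      rw [h1, h1]
      show _ = term M E f (k + 1) (Fin.cons true c) + term M E f (k + 1) (Fin.cons false c)
      have h2 : ∀ b : Bool, term M E f (k + 1) (Fin.cons b c)
          = cond b f E * (M * term M E f k c) := by
        intro b
        have : term M E f (k + 1) (Fin.cons b c) = cond ((Fin.cons b c : Fin (k+2) → Bool) 0) f E
            * (M * term M E f k fun i => (Fin.cons b c : Fin (k+2) → Bool) i.succ) := rfl
        rw [this]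
        simp [Fin.cons_zero, Fin.cons_succ]
      rw [h2, h2]
      simp only [cond]
      rw [add_mul]
      exact add_comm _ _

/-- `Bk M T k = E_T (M E_T)^k`; summing these over `k` yields the inverse of the principal
submatrix of `1 - M` on `T`. -/
noncomputable def Bk (M : Matrix (Fin n) (Fin n) ℝ) (T : Finset (Fin n)) (k : ℕ) :
    Matrix (Fin n) (Fin n) ℝ := Ed T * (M * Ed T) ^ k

lemma Bk_succ (M : Matrix (Fin n) (Fin n) ℝ) (T : Finset (Fin n)) (k : ℕ) :
    Bk M T (k + 1) = Ed T * (M * Bk M T k) := by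
  rw [Bk, Bk, pow_succ', mul_assoc M (Ed T) ((M * Ed T) ^ k), ← mul_assoc (Ed T) M _]

lemma Bk_eq_term (M : Matrix (Fin n) (Fin n) ℝ) (T : Finset (Fin n)) (f : Matrix (Fin n) (Fin n) ℝ) :
    ∀ k, Bk M T k = term M (Ed T) f k (fun _ => false) := by
  intro k
  induction k with
  | zero => rw [Bk, pow_zero, mul_one]; rfl
  | succ k ih =>
      rw [Bk_succ, ih]
      rfl

lemma Bk_superadd {M : Matrix (Fin n) (Fin n) ℝ} (hM : ∀ i j, 0 ≤ M i j)
    (S S' : Finset (Fin n)) (hss : S ⊆ S') (e : Fin n) (he : e ∉ S') (k : ℕ) (i j : Fin n) :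
    Bk M (insert e S) k i j + Bk M S' k i j ≤ Bk M (insert e S') k i j + Bk M S k i j := by
  have heS : e ∉ S := fun h => he (hss h)
  have hins : ∀ (T : Finset (Fin n)), e ∉ T → Bk M (insert e T) k
      = ∑ c : Fin (k + 1) → Bool, term M (Ed T) (Ed {e}) k c := by
    intro T hT
    rw [Bk, Ed_insert e T hT, expand]
  rw [hins S heS, hins S' he, Bk_eq_term M S (Ed {e}), Bk_eq_term M S' (Ed {e})]
  simp only [Matrix.sum_apply]
  have hsplit : ∀ (E : Matrix (Fin n) (Fin n) ℝ),
      ∑ c : Fin (k + 1) → Bool, term M E (Ed {e}) k c i j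
      = term M E (Ed {e}) k (fun _ => false) i j
        + ∑ c ∈ Finset.univ.erase (fun _ => false), term M E (Ed {e}) k c i j := by
    intro E
    exact (Finset.add_sum_erase _ _ (Finset.mem_univ _)).symm
  rw [hsplit (Ed S), hsplit (Ed S')]
  have hmono : ∑ c ∈ Finset.univ.erase (fun _ => false), term M (Ed S) (Ed {e}) k c i j
      ≤ ∑ c ∈ Finset.univ.erase (fun _ => false), term M (Ed S') (Ed {e}) k c i j :=
    Finset.sum_le_sum fun c _ =>
      term_mono hM (Ed_nonneg S) (Ed_nonneg {e}) (Ed_le S S' hss) k c i j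
  linarith

lemma Bk_nonneg {M : Matrix (Fin n) (Fin n) ℝ} (hM : ∀ i j, 0 ≤ M i j)
    (T : Finset (Fin n)) (k : ℕ) (i j : Fin n) : 0 ≤ Bk M T k i j := by
  rw [Bk_eq_term M T 0]
  exact term_nonneg hM (Ed_nonneg T) (fun i j => le_refl 0) k _ i j

end Comb

section Analytic
variable {n : ℕ}

lemma dot_self_nonneg (v : Fin n → ℝ) : 0 ≤ v ⬝ᵥ v :=
  Finset.sum_nonneg fun i _ => mul_self_nonneg _

lemma dot_entry_le (v : Fin n → ℝ) (i : Fin n) : v i * v i ≤ v ⬝ᵥ v :=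
  Finset.single_le_sum (f := fun m => v m * v m) (fun m _ => mul_self_nonneg _) (Finset.mem_univ i)

lemma vecMul_eq_of_sym {M : Matrix (Fin n) (Fin n) ℝ} (hsym : Mᵀ = M) (x : Fin n → ℝ) :
    x ᵥ* M = M *ᵥ x := by
  conv_lhs => rw [← hsym]
  rw [vecMul_transpose]

lemma dot_sym {M : Matrix (Fin n) (Fin n) ℝ} (hsym : Mᵀ = M) (x y : Fin n → ℝ) :
    x ⬝ᵥ M *ᵥ y = y ⬝ᵥ M *ᵥ x := by
  rw [dotProduct_mulVec, vecMul_eq_of_sym hsym, dotProduct_comm]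

lemma quad_bound_op {M : Matrix (Fin n) (Fin n) ℝ} (hsym : Mᵀ = M) {r : ℝ} (hr : 0 ≤ r)
    (hq : ∀ x, |x ⬝ᵥ M *ᵥ x| ≤ r * (x ⬝ᵥ x)) (x : Fin n → ℝ) :
    (M *ᵥ x) ⬝ᵥ (M *ᵥ x) ≤ r ^ 2 * (x ⬝ᵥ x) := by
  set u := M *ᵥ x with hu
  by_cases ha : u ⬝ᵥ u = 0
  · rw [ha]
    exact mul_nonneg (sq_nonneg r) (dot_self_nonneg x)
  have ha' : 0 < u ⬝ᵥ u := (dot_self_nonneg u).lt_of_ne (Ne.symm ha)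
  have hbil : ∀ v w : Fin n → ℝ, (v + w) ⬝ᵥ M *ᵥ (v + w)
      = v ⬝ᵥ M *ᵥ v + v ⬝ᵥ M *ᵥ w + w ⬝ᵥ M *ᵥ v + w ⬝ᵥ M *ᵥ w := by
    intro v w
    rw [mulVec_add, dotProduct_add, add_dotProduct, add_dotProduct]
    ring
  have hpar : ∀ v w : Fin n → ℝ, (v + w) ⬝ᵥ (v + w) + (v - w) ⬝ᵥ (v - w)
      = 2 * (v ⬝ᵥ v) + 2 * (w ⬝ᵥ w) := by
    intro v w
    have h1 : v - w = v + (-1 : ℝ) • w := by funext i; simp; ring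
    rw [h1]
    simp only [dotProduct_add, add_dotProduct, smul_dotProduct, dotProduct_smul, smul_eq_mul]
    rw [dotProduct_comm w v]
    ring
  have hcross : x ⬝ᵥ M *ᵥ u = u ⬝ᵥ u := by
    rw [dot_sym hsym, ← hu]
  have hcross2 : u ⬝ᵥ M *ᵥ x = u ⬝ᵥ u := by rw [← hu]
  have key : ∀ t : ℝ, 0 ≤ (2 * r * (u ⬝ᵥ u)) * (t * t) + (-(4 * (u ⬝ᵥ u))) * t
      + 2 * r * (x ⬝ᵥ x) := by
    intro t
    have hsub : x - t • u = x + (-t) • u := by funext i; simp; ring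
    have e1 : (x + t • u) ⬝ᵥ M *ᵥ (x + t • u)
        = x ⬝ᵥ M *ᵥ x + 2 * t * (u ⬝ᵥ u) + t * t * (u ⬝ᵥ M *ᵥ u) := by
      rw [hbil]
      simp only [mulVec_smul, smul_dotProduct, dotProduct_smul, smul_eq_mul]
      rw [hcross, hcross2]
      ring
    have e2 : (x - t • u) ⬝ᵥ M *ᵥ (x - t • u)
        = x ⬝ᵥ M *ᵥ x - 2 * t * (u ⬝ᵥ u) + t * t * (u ⬝ᵥ M *ᵥ u) := by
      rw [hsub, hbil]
      simp only [mulVec_smul, smul_dotProduct, dotProduct_smul, smul_eq_mul]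
      rw [hcross, hcross2]
      ring
    have hd1 := hq (x + t • u)
    have hd2 := hq (x - t • u)
    have hpar' : (x + t • u) ⬝ᵥ (x + t • u) + (x - t • u) ⬝ᵥ (x - t • u)
        = 2 * (x ⬝ᵥ x) + 2 * (t * t * (u ⬝ᵥ u)) := by
      rw [hpar, smul_dotProduct, dotProduct_smul, smul_eq_mul, smul_eq_mul]
      ring
    have h4 : 4 * (t * (u ⬝ᵥ u)) ≤ r * ((x + t • u) ⬝ᵥ (x + t • u))
        + r * ((x - t • u) ⬝ᵥ (x - t • u)) := by
      have l1 : (x + t • u) ⬝ᵥ M *ᵥ (x + t • u) ≤ r * ((x + t • u) ⬝ᵥ (x + t • u)) :=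
        le_trans (le_abs_self _) hd1
      have l2 : -(r * ((x - t • u) ⬝ᵥ (x - t • u))) ≤ (x - t • u) ⬝ᵥ M *ᵥ (x - t • u) :=
        neg_le_of_abs_le hd2
      have := sub_le_sub l1 l2
      rw [e1, e2] at this
      linarith
    have h5 : r * ((x + t • u) ⬝ᵥ (x + t • u)) + r * ((x - t • u) ⬝ᵥ (x - t • u))
        = 2 * r * (x ⬝ᵥ x) + 2 * r * (t * t * (u ⬝ᵥ u)) := by
      rw [← mul_add, hpar']
      ring
    nlinarith [h4, h5]
  have hdisc := discrim_le_zero key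
  rw [discrim] at hdisc
  -- hdisc : (-(4 a))^2 - 4 * (2 r a) * (2 r (x⬝x)) ≤ 0
  nlinarith [hdisc, ha', dot_self_nonneg x]

lemma pow_quad {M : Matrix (Fin n) (Fin n) ℝ} (hsym : Mᵀ = M) {r : ℝ} (hr : 0 ≤ r)
    (hq : ∀ x, |x ⬝ᵥ M *ᵥ x| ≤ r * (x ⬝ᵥ x)) :
    ∀ (k : ℕ) (x : Fin n → ℝ), (M ^ k *ᵥ x) ⬝ᵥ (M ^ k *ᵥ x) ≤ r ^ (2 * k) * (x ⬝ᵥ x) := by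
  intro k
  induction k with
  | zero => intro x; rw [pow_zero, one_mulVec, Nat.mul_zero, pow_zero, one_mul]
  | succ k ih =>
      intro x
      have h1 : M ^ (k + 1) *ᵥ x = M *ᵥ (M ^ k *ᵥ x) := by
        rw [mulVec_mulVec, ← pow_succ']
      rw [h1]
      calc (M *ᵥ (M ^ k *ᵥ x)) ⬝ᵥ (M *ᵥ (M ^ k *ᵥ x))
          ≤ r ^ 2 * ((M ^ k *ᵥ x) ⬝ᵥ (M ^ k *ᵥ x)) := quad_bound_op hsym hr hq _
      _ ≤ r ^ 2 * (r ^ (2 * k) * (x ⬝ᵥ x)) :=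
          mul_le_mul_of_nonneg_left (ih x) (sq_nonneg r)
      _ = r ^ (2 * (k + 1)) * (x ⬝ᵥ x) := by
          rw [show 2 * (k + 1) = 2 + 2 * k by ring, pow_add]
          ring

lemma pow_entry_abs {M : Matrix (Fin n) (Fin n) ℝ} (hsym : Mᵀ = M) {r : ℝ} (hr : 0 ≤ r)
    (hq : ∀ x, |x ⬝ᵥ M *ᵥ x| ≤ r * (x ⬝ᵥ x)) (k : ℕ) (i j : Fin n) :
    |(M ^ k) i j| ≤ r ^ k := by
  have hv : (M ^ k *ᵥ Pi.single j 1) = fun i' => (M ^ k) i' j := by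
    rw [mulVec_single]
    funext i'
    simp
  have h1 : ((M ^ k) i j) * ((M ^ k) i j) ≤ (M ^ k *ᵥ Pi.single j 1) ⬝ᵥ (M ^ k *ᵥ Pi.single j 1) := by
    rw [hv]
    exact dot_entry_le (fun i' => (M ^ k) i' j) i
  have h2 : (M ^ k *ᵥ Pi.single j 1) ⬝ᵥ (M ^ k *ᵥ Pi.single j 1)
      ≤ r ^ (2 * k) * (Pi.single j (1:ℝ) ⬝ᵥ Pi.single j 1) := pow_quad hsym hr hq k _
  have h3 : Pi.single j (1:ℝ) ⬝ᵥ Pi.single j 1 = 1 := by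
    rw [dotProduct_single, Pi.single_eq_same, mul_one]
  have h12 : (M ^ k) i j * (M ^ k) i j ≤ r ^ (2 * k) := by
    have h := le_trans h1 h2
    rwa [h3, mul_one] at h
  have h5 : ((M ^ k) i j) ^ 2 ≤ (r ^ k) ^ 2 := by
    rw [sq]
    calc (M ^ k) i j * (M ^ k) i j ≤ r ^ (2 * k) := h12
    _ = (r ^ k) ^ 2 := by rw [mul_comm 2 k, pow_mul]
  calc |(M ^ k) i j| = Real.sqrt (((M ^ k) i j) ^ 2) := (Real.sqrt_sq_eq_abs _).symm
  _ ≤ Real.sqrt ((r ^ k) ^ 2) := Real.sqrt_le_sqrt h5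
  _ = r ^ k := by rw [Real.sqrt_sq_eq_abs, abs_of_nonneg (pow_nonneg hr k)]

lemma exists_r [Nonempty (Fin n)] {M : Matrix (Fin n) (Fin n) ℝ}
    (hlt : ∀ y : Fin n → ℝ, y ≠ 0 → |y ⬝ᵥ M *ᵥ y| < y ⬝ᵥ y) :
    ∃ r : ℝ, 0 ≤ r ∧ r < 1 ∧ ∀ x, |x ⬝ᵥ M *ᵥ x| ≤ r * (x ⬝ᵥ x) := by
  set s : Set (Fin n → ℝ) := {x | x ⬝ᵥ x = 1} with hs
  have hdc : Continuous fun x : Fin n → ℝ => x ⬝ᵥ x := by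
    show Continuous fun x : Fin n → ℝ => ∑ i : Fin n, x i * x i
    exact continuous_finset_sum _ fun i _ => (continuous_apply i).mul (continuous_apply i)
  have hqc : Continuous fun x : Fin n → ℝ => |x ⬝ᵥ M *ᵥ x| := by
    have : Continuous fun x : Fin n → ℝ => ∑ i : Fin n, x i * ∑ j : Fin n, M i j * x j :=
      continuous_finset_sum _ fun i _ => (continuous_apply i).mul
        (continuous_finset_sum _ fun j _ => continuous_const.mul (continuous_apply j))
    exact this.abs
  have hclosed : IsClosed s := isClosed_eq hdc continuous_const
  have hbdd : Bornology.IsBounded s := by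
    refine (Metric.isBounded_closedBall (x := (0 : Fin n → ℝ)) (r := 1)).subset ?_
    intro x hx
    have hx1 : x ⬝ᵥ x = 1 := hx
    rw [Metric.mem_closedBall, dist_zero_right]
    rw [pi_norm_le_iff_of_nonneg zero_le_one]
    intro i
    have h1 : x i * x i ≤ 1 := by
      have hle := dot_entry_le x i
      rw [hx1] at hle
      exact hle
    rw [Real.norm_eq_abs]
    nlinarith [abs_nonneg (x i), abs_mul_abs_self (x i)]
  have hcomp : IsCompact s := Metric.isCompact_of_isClosed_isBounded hclosed hbdd
  have hne : s.Nonempty := by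
    refine ⟨Pi.single (Classical.arbitrary (Fin n)) 1, ?_⟩
    show Pi.single (Classical.arbitrary (Fin n)) (1:ℝ) ⬝ᵥ Pi.single (Classical.arbitrary (Fin n)) 1 = 1
    rw [dotProduct_single, Pi.single_eq_same, mul_one]
  obtain ⟨x₀, hx₀, hmax'⟩ := hcomp.exists_isMaxOn hne hqc.continuousOn
  have hmax : ∀ y ∈ s, |y ⬝ᵥ M *ᵥ y| ≤ |x₀ ⬝ᵥ M *ᵥ x₀| := fun y hy => hmax' hy
  have hx₀1 : x₀ ⬝ᵥ x₀ = 1 := hx₀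
  refine ⟨|x₀ ⬝ᵥ M *ᵥ x₀|, abs_nonneg _, ?_, ?_⟩
  · have hx0ne : x₀ ≠ 0 := by
      intro h
      rw [h] at hx₀1
      rw [zero_dotProduct] at hx₀1
      norm_num at hx₀1
    have := hlt x₀ hx0ne
    rw [hx₀1] at this
    exact this
  · intro x
    by_cases hx : x = 0
    · subst hx
      rw [zero_dotProduct, zero_dotProduct, abs_zero, mul_zero]
    · have ha : 0 < x ⬝ᵥ x :=
        (dot_self_nonneg x).lt_of_ne fun h => hx (dotProduct_self_eq_zero.mp h.symm)
      set c := (Real.sqrt (x ⬝ᵥ x))⁻¹ with hc_def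
      have hsq : Real.sqrt (x ⬝ᵥ x) * Real.sqrt (x ⬝ᵥ x) = x ⬝ᵥ x := Real.mul_self_sqrt ha.le
      have hsp : 0 < Real.sqrt (x ⬝ᵥ x) := Real.sqrt_pos.mpr ha
      have hc : 0 < c := inv_pos.mpr hsp
      have hc2 : c * c = (x ⬝ᵥ x)⁻¹ := by rw [hc_def, ← mul_inv, hsq]
      have hmem : (c • x) ∈ s := by
        show (c • x) ⬝ᵥ (c • x) = 1
        rw [smul_dotProduct, dotProduct_smul, smul_eq_mul, smul_eq_mul, ← mul_assoc, hc2,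
          inv_mul_cancel₀ (ne_of_gt ha)]
      have hb := hmax (c • x) hmem
      have hexp : (c • x) ⬝ᵥ M *ᵥ (c • x) = c * (c * (x ⬝ᵥ M *ᵥ x)) := by
        rw [mulVec_smul, smul_dotProduct, dotProduct_smul, smul_eq_mul, smul_eq_mul]
      rw [hexp, abs_mul, abs_mul, abs_of_pos hc] at hb
      have heq : c * (c * |x ⬝ᵥ M *ᵥ x|) * (x ⬝ᵥ x) = |x ⬝ᵥ M *ᵥ x| := by
        rw [show c * (c * |x ⬝ᵥ M *ᵥ x|) = (c * c) * |x ⬝ᵥ M *ᵥ x| by ring, hc2]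
        field_simp
      calc |x ⬝ᵥ M *ᵥ x| = c * (c * |x ⬝ᵥ M *ᵥ x|) * (x ⬝ᵥ x) := heq.symm
      _ ≤ |x₀ ⬝ᵥ M *ᵥ x₀| * (x ⬝ᵥ x) := mul_le_mul_of_nonneg_right hb ha.le
end Analytic

section BkPow
variable {n : ℕ}

lemma Bk_eq_pow (M : Matrix (Fin n) (Fin n) ℝ) (T : Finset (Fin n)) :
    ∀ k, Bk M T k = Ed T * (Ed T * M * Ed T) ^ k := by
  intro k
  induction k with
  | zero => rw [Bk, pow_zero, pow_zero]
  | succ k ih =>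
      rw [Bk_succ, ih, pow_succ']
      conv_rhs => rw [← mul_assoc]
      rw [show Ed T * (Ed T * M * Ed T) = Ed T * M * Ed T by
        rw [← mul_assoc, ← mul_assoc, Ed_mul_Ed]]
      simp only [mul_assoc]

lemma E_mul_Bk (M : Matrix (Fin n) (Fin n) ℝ) (T : Finset (Fin n)) (k : ℕ) :
    Ed T * Bk M T k = Bk M T k := by
  rw [Bk, ← mul_assoc, Ed_mul_Ed]

lemma EME_mul_Bk (M : Matrix (Fin n) (Fin n) ℝ) (T : Finset (Fin n)) (k : ℕ) :
    (Ed T * M * Ed T) * Bk M T k = Bk M T (k + 1) := by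
  rw [Bk_succ, mul_assoc, E_mul_Bk, ← mul_assoc]

lemma Bk_mul_E (M : Matrix (Fin n) (Fin n) ℝ) (T : Finset (Fin n)) (k : ℕ) :
    Bk M T k * Ed T = Bk M T k := by
  induction k with
  | zero => rw [Bk, pow_zero, mul_one, Ed_mul_Ed]
  | succ k ih =>
      rw [Bk_succ, mul_assoc, mul_assoc, ih]

lemma Bk_mul_EME (M : Matrix (Fin n) (Fin n) ℝ) (T : Finset (Fin n)) (k : ℕ) :
    Bk M T k * (Ed T * M * Ed T) = Bk M T (k + 1) := by
  have h1 : Bk M T k * (Ed T * M * Ed T) = Bk M T k * (M * Ed T) := by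
    rw [show Ed T * M * Ed T = Ed T * (M * Ed T) by rw [mul_assoc], ← mul_assoc, Bk_mul_E]
  rw [h1, Bk, Bk, mul_assoc, ← pow_succ]

end BkPow


section QPart
variable {n : ℕ}

/-- Off-diagonal part of `Q`, normalized by the diagonal: `M = I - D^{-1/2} Q D^{-1/2}`. -/
noncomputable def Mm (Q : Matrix (Fin n) (Fin n) ℝ) : Matrix (Fin n) (Fin n) ℝ :=
  Matrix.of fun i j =>
    if i = j then 0 else -(Q i j) / (Real.sqrt (Q i i) * Real.sqrt (Q j j))

noncomputable def Dg (Q : Matrix (Fin n) (Fin n) ℝ) : Matrix (Fin n) (Fin n) ℝ :=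
  Matrix.diagonal fun i => Real.sqrt (Q i i)

noncomputable def Dgi (Q : Matrix (Fin n) (Fin n) ℝ) : Matrix (Fin n) (Fin n) ℝ :=
  Matrix.diagonal fun i => (Real.sqrt (Q i i))⁻¹

noncomputable def Lmat (Q : Matrix (Fin n) (Fin n) ℝ) (T : Finset (Fin n)) :
    Matrix (Fin n) (Fin n) ℝ :=
  Matrix.of fun i j => ∑' k : ℕ, Bk (Mm Q) T k i j

noncomputable def Pmat (Q : Matrix (Fin n) (Fin n) ℝ) (T : Finset (Fin n)) :
    Matrix (Fin n) (Fin n) ℝ := Dgi Q * Lmat Q T * Dgi Q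

lemma Mm_apply (Q : Matrix (Fin n) (Fin n) ℝ) (i j : Fin n) :
    Mm Q i j = if i = j then 0 else -(Q i j) / (Real.sqrt (Q i i) * Real.sqrt (Q j j)) := rfl

lemma Lmat_apply (Q : Matrix (Fin n) (Fin n) ℝ) (T : Finset (Fin n)) (i j : Fin n) :
    Lmat Q T i j = ∑' k : ℕ, Bk (Mm Q) T k i j := rfl

variable {Q : Matrix (Fin n) (Fin n) ℝ}

lemma diag_pos (hQ : Q.PosDef) (i : Fin n) : 0 < Q i i := by
  have hne : (Pi.single i 1 : Fin n → ℝ) ≠ 0 := by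
    intro h
    have := congrFun h i
    rw [Pi.single_eq_same] at this
    exact one_ne_zero this
  have h := hQ.dotProduct_mulVec_pos hne
  have hstar : star (Pi.single i 1 : Fin n → ℝ) = Pi.single i 1 := by
    funext m; simp
  rw [hstar, mulVec_single] at h
  have heq : (Pi.single i 1 : Fin n → ℝ) ⬝ᵥ (fun i' => Q i' i * 1) = Q i i := by
    rw [single_dotProduct, one_mul, mul_one]
  simpa [single_dotProduct] using h

lemma Qsym (hQ : Q.PosDef) (i j : Fin n) : Q j i = Q i j := by
  have := congrFun (congrFun hQ.1 i) j
  simpa using this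

lemma Mm_sym (hQ : Q.PosDef) : (Mm Q)ᵀ = Mm Q := by
  ext i j
  rw [transpose_apply, Mm_apply, Mm_apply]
  by_cases hij : i = j
  · subst hij; simp
  · rw [if_neg (Ne.symm hij), if_neg hij, Qsym hQ, mul_comm]

lemma Mm_nonneg (hQ : Q.PosDef) (hoff : ∀ i j : Fin n, i ≠ j → Q i j ≤ 0) (i j : Fin n) :
    0 ≤ Mm Q i j := by
  rw [Mm_apply]
  by_cases hij : i = j
  · simp [hij]
  · rw [if_neg hij]
    apply div_nonneg (by linarith [hoff i j hij])
    exact mul_nonneg (Real.sqrt_nonneg _) (Real.sqrt_nonneg _)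

lemma Mm_quad_lt (hQ : Q.PosDef) (hoff : ∀ i j : Fin n, i ≠ j → Q i j ≤ 0)
    (y : Fin n → ℝ) (hy : y ≠ 0) : |y ⬝ᵥ (Mm Q) *ᵥ y| < y ⬝ᵥ y := by
  set ya : Fin n → ℝ := fun i => |y i| with hya
  have hya_ne : ya ≠ 0 := by
    intro h
    apply hy
    funext i
    have := congrFun h i
    simpa [hya, abs_eq_zero] using this
  have hstep1 : |y ⬝ᵥ (Mm Q) *ᵥ y| ≤ ya ⬝ᵥ (Mm Q) *ᵥ ya := by
    have e1 : |y ⬝ᵥ (Mm Q) *ᵥ y| = |∑ i, y i * ∑ j, Mm Q i j * y j| := rfl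
    have e2 : ya ⬝ᵥ (Mm Q) *ᵥ ya = ∑ i, ya i * ∑ j, Mm Q i j * ya j := rfl
    rw [e1, e2]
    have t1 : |∑ i, y i * ∑ j, Mm Q i j * y j| ≤ ∑ i, |y i * ∑ j, Mm Q i j * y j| :=
      Finset.abs_sum_le_sum_abs _ _
    have t2 : (∑ i, |y i * ∑ j, Mm Q i j * y j|) ≤ ∑ i, ya i * ∑ j, Mm Q i j * ya j := by
      refine Finset.sum_le_sum fun i _ => ?_
      rw [abs_mul]
      refine mul_le_mul_of_nonneg_left ?_ (abs_nonneg _)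
      have u1 : |∑ j, Mm Q i j * y j| ≤ ∑ j, |Mm Q i j * y j| := Finset.abs_sum_le_sum_abs _ _
      have u2 : (∑ j, |Mm Q i j * y j|) = ∑ j, Mm Q i j * ya j := by
        refine Finset.sum_congr rfl fun j _ => ?_
        rw [abs_mul, abs_of_nonneg (Mm_nonneg hQ hoff i j)]
      rw [u2] at u1
      exact u1
    exact le_trans t1 t2
  set x : Fin n → ℝ := fun i => ya i * (Real.sqrt (Q i i))⁻¹ with hxdef
  have hsqrt_pos : ∀ i, 0 < Real.sqrt (Q i i) := fun i => Real.sqrt_pos.mpr (diag_pos hQ i)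
  have hxne : x ≠ 0 := by
    obtain ⟨i, hi⟩ := Function.ne_iff.mp hya_ne
    intro h
    have hxi := congrFun h i
    rw [hxdef] at hxi
    exact (mul_ne_zero hi (inv_ne_zero (hsqrt_pos i).ne')) hxi
  have per : ∀ i j, x i * (Q i j * x j)
      = (if j = i then ya i * ya i else 0) - ya i * (Mm Q i j * ya j) := by
    intro i j
    by_cases hij : i = j
    · subst hij
      rw [if_pos rfl, Mm_apply, if_pos rfl]
      have h2 : Real.sqrt (Q i i) * Real.sqrt (Q i i) = Q i i :=
        Real.mul_self_sqrt (diag_pos hQ i).le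
      have h3 : Q i i ≠ 0 := (diag_pos hQ i).ne'
      calc x i * (Q i i * x i)
          = (ya i * ya i) * (Q i i * ((Real.sqrt (Q i i))⁻¹ * (Real.sqrt (Q i i))⁻¹)) := by
            rw [hxdef]; ring
      _ = ya i * ya i - ya i * (0 * ya i) := by
            rw [← mul_inv, h2, mul_inv_cancel₀ h3]; ring
    · rw [if_neg (fun h => hij h.symm), Mm_apply, if_neg hij]
      rw [hxdef]
      rw [div_eq_mul_inv, mul_inv]
      ring
  have hid : (x ⬝ᵥ Q *ᵥ x) = ya ⬝ᵥ ya - ya ⬝ᵥ (Mm Q) *ᵥ ya := by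
    have e0 : x ⬝ᵥ Q *ᵥ x = ∑ i, x i * ∑ j, Q i j * x j := rfl
    rw [e0]
    have s1 : (∑ i, x i * ∑ j, Q i j * x j) = ∑ i, ∑ j, x i * (Q i j * x j) := by
      refine Finset.sum_congr rfl fun i _ => ?_
      exact Finset.mul_sum _ _ _
    have s2 : (∑ i, ∑ j, x i * (Q i j * x j))
        = ∑ i, ((∑ j, if j = i then ya i * ya i else 0) - ∑ j, ya i * (Mm Q i j * ya j)) := by
      refine Finset.sum_congr rfl fun i _ => ?_
      rw [← Finset.sum_sub_distrib]
      exact Finset.sum_congr rfl fun j _ => per i j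
    have s3 : (∑ i, ((∑ j, if j = i then ya i * ya i else 0) - ∑ j, ya i * (Mm Q i j * ya j)))
        = ∑ i, (ya i * ya i - ya i * ∑ j, Mm Q i j * ya j) := by
      refine Finset.sum_congr rfl fun i _ => ?_
      rw [Finset.sum_ite_eq' Finset.univ i fun _ => ya i * ya i, if_pos (Finset.mem_univ i),
        ← Finset.mul_sum]
    have s4 : (∑ i, (ya i * ya i - ya i * ∑ j, Mm Q i j * ya j))
        = ya ⬝ᵥ ya - ya ⬝ᵥ (Mm Q) *ᵥ ya := by
      rw [Finset.sum_sub_distrib]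
      rfl
    rw [s1, s2, s3, s4]
  have hpos := hQ.dotProduct_mulVec_pos hxne
  have hstarx : star x = x := by funext m; simp
  rw [hstarx, hid] at hpos
  have hyy : ya ⬝ᵥ ya = y ⬝ᵥ y :=
    Finset.sum_congr rfl fun i _ => abs_mul_abs_self (y i)
  calc |y ⬝ᵥ Mm Q *ᵥ y| ≤ ya ⬝ᵥ Mm Q *ᵥ ya := hstep1
  _ < ya ⬝ᵥ ya := by linarith
  _ = y ⬝ᵥ y := hyy

end QPart


section QPart2
variable {n : ℕ} {Q : Matrix (Fin n) (Fin n) ℝ}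

lemma Ed_transpose (T : Finset (Fin n)) : (Ed T)ᵀ = Ed T := by
  rw [Ed, diagonal_transpose]

lemma Ed_mul_apply (T : Finset (Fin n)) (A : Matrix (Fin n) (Fin n) ℝ) (i j : Fin n) :
    (Ed T * A) i j = (if i ∈ T then 1 else 0) * A i j := by
  rw [Ed, diagonal_mul]

lemma Bk_zero_eq (M : Matrix (Fin n) (Fin n) ℝ) (T : Finset (Fin n)) :
    Bk M T 0 = Ed T := by
  rw [Bk, pow_zero, mul_one]

lemma At_sym (hQ : Q.PosDef) (T : Finset (Fin n)) :
    (Ed T * Mm Q * Ed T)ᵀ = Ed T * Mm Q * Ed T := by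
  rw [transpose_mul, transpose_mul, Mm_sym hQ, Ed_transpose, ← mul_assoc]

lemma diag_mulVec (v : Fin n → ℝ) (x : Fin n → ℝ) :
    Matrix.diagonal v *ᵥ x = fun i => v i * x i := by
  funext i
  show (fun j => Matrix.diagonal v i j) ⬝ᵥ x = v i * x i
  have : (fun j => Matrix.diagonal v i j) ⬝ᵥ x
      = ∑ j, (if i = j then v i else 0) * x j := by
    refine Finset.sum_congr rfl fun j _ => ?_
    simp only [diagonal_apply]
  rw [this]
  have h2 : ∀ j ∈ Finset.univ, (if i = j then v i else 0) * x j
      = if i = j then v i * x j else 0 := by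
    intro j _
    split_ifs <;> ring
  rw [Finset.sum_congr rfl h2, Finset.sum_ite_eq Finset.univ i fun j => v i * x j,
    if_pos (Finset.mem_univ i)]

lemma masked_quad (hQ : Q.PosDef) {r : ℝ} (hr : 0 ≤ r)
    (hq : ∀ x, |x ⬝ᵥ (Mm Q) *ᵥ x| ≤ r * (x ⬝ᵥ x)) (T : Finset (Fin n)) (x : Fin n → ℝ) :
    |x ⬝ᵥ (Ed T * Mm Q * Ed T) *ᵥ x| ≤ r * (x ⬝ᵥ x) := by
  have h1 : (Ed T * Mm Q * Ed T) *ᵥ x = Ed T *ᵥ (Mm Q *ᵥ (Ed T *ᵥ x)) := by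
    rw [mulVec_mulVec, mulVec_mulVec]
  set xs := Ed T *ᵥ x with hxs
  have h2 : x ⬝ᵥ (Ed T *ᵥ (Mm Q *ᵥ xs)) = xs ⬝ᵥ (Mm Q *ᵥ xs) := by
    rw [dotProduct_mulVec, vecMul_eq_of_sym (Ed_transpose T)]
  rw [h1, h2]
  have h3 : xs ⬝ᵥ xs ≤ x ⬝ᵥ x := by
    have hxse : xs = fun i => (if i ∈ T then (1:ℝ) else 0) * x i := by
      rw [hxs, Ed, diag_mulVec]
    rw [hxse]
    refine Finset.sum_le_sum fun i _ => ?_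
    dsimp only
    split_ifs <;> simp [mul_self_nonneg]
  calc |xs ⬝ᵥ Mm Q *ᵥ xs| ≤ r * (xs ⬝ᵥ xs) := hq xs
  _ ≤ r * (x ⬝ᵥ x) := mul_le_mul_of_nonneg_left h3 hr

lemma exists_geo [Nonempty (Fin n)] (hQ : Q.PosDef) (hoff : ∀ i j : Fin n, i ≠ j → Q i j ≤ 0) :
    ∃ r : ℝ, 0 ≤ r ∧ r < 1 ∧ ∀ (T : Finset (Fin n)) (k : ℕ) (i j : Fin n),
      |Bk (Mm Q) T k i j| ≤ r ^ k := by
  obtain ⟨r, hr0, hr1, hq⟩ := exists_r (Mm_quad_lt hQ hoff)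
  refine ⟨r, hr0, hr1, fun T k i j => ?_⟩
  rw [Bk_eq_pow]
  have hent := pow_entry_abs (At_sym hQ T) hr0 (masked_quad hQ hr0 hq T) k i j
  rw [Ed_mul_apply, abs_mul]
  by_cases hiT : i ∈ T
  · rw [if_pos hiT, abs_one, one_mul]
    exact hent
  · rw [if_neg hiT, abs_zero, zero_mul]
    exact pow_nonneg hr0 k

lemma Bk_summable [Nonempty (Fin n)] (hQ : Q.PosDef)
    (hoff : ∀ i j : Fin n, i ≠ j → Q i j ≤ 0) (T : Finset (Fin n)) (i j : Fin n) :
    Summable fun k => Bk (Mm Q) T k i j := by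
  obtain ⟨r, hr0, hr1, hgeo⟩ := exists_geo hQ hoff
  refine Summable.of_norm_bounded (summable_geometric_of_lt_one hr0 hr1) ?_
  intro k
  rw [Real.norm_eq_abs]
  exact hgeo T k i j

lemma sub_mul_L [Nonempty (Fin n)] (hQ : Q.PosDef)
    (hoff : ∀ i j : Fin n, i ≠ j → Q i j ≤ 0) (T : Finset (Fin n)) :
    (Ed T - Ed T * Mm Q * Ed T) * Lmat Q T = Ed T := by
  have hX : ∀ k, (Ed T - Ed T * Mm Q * Ed T) * Bk (Mm Q) T k
      = Bk (Mm Q) T k - Bk (Mm Q) T (k + 1) := by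
    intro k
    rw [sub_mul, E_mul_Bk, EME_mul_Bk]
  ext i j
  have hsum : ∀ m j', Summable fun k => Bk (Mm Q) T k m j' := fun m j' =>
    Bk_summable hQ hoff T m j'
  rw [Matrix.mul_apply]
  have e2 : (∑ m, (Ed T - Ed T * Mm Q * Ed T) i m * Lmat Q T m j)
      = ∑ m, ∑' k, (Ed T - Ed T * Mm Q * Ed T) i m * Bk (Mm Q) T k m j :=
    Finset.sum_congr rfl fun m _ => by rw [Lmat_apply, tsum_mul_left]
  have hsum2 : ∀ m ∈ Finset.univ, Summable fun k =>
      (Ed T - Ed T * Mm Q * Ed T) i m * Bk (Mm Q) T k m j :=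
    fun m _ => (hsum m j).mul_left _
  have e3 : (∑ m, ∑' k, (Ed T - Ed T * Mm Q * Ed T) i m * Bk (Mm Q) T k m j)
      = ∑' k, ∑ m, (Ed T - Ed T * Mm Q * Ed T) i m * Bk (Mm Q) T k m j :=
    (Summable.tsum_finsetSum hsum2).symm
  have e4 : ∀ k : ℕ, (∑ m, (Ed T - Ed T * Mm Q * Ed T) i m * Bk (Mm Q) T k m j)
      = Bk (Mm Q) T k i j - Bk (Mm Q) T (k + 1) i j := by
    intro k
    rw [← Matrix.mul_apply, hX k, Matrix.sub_apply]
  have e5 : (∑' k : ℕ, (Bk (Mm Q) T k i j - Bk (Mm Q) T (k + 1) i j)) = Bk (Mm Q) T 0 i j := by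
    rw [Summable.tsum_sub (hsum i j) ((summable_nat_add_iff 1).mpr (hsum i j))]
    have := Summable.tsum_eq_zero_add (hsum i j)
    linarith
  rw [e2, e3, tsum_congr e4, e5, Bk_zero_eq]

lemma L_mul_sub [Nonempty (Fin n)] (hQ : Q.PosDef)
    (hoff : ∀ i j : Fin n, i ≠ j → Q i j ≤ 0) (T : Finset (Fin n)) :
    Lmat Q T * (Ed T - Ed T * Mm Q * Ed T) = Ed T := by
  have hX : ∀ k, Bk (Mm Q) T k * (Ed T - Ed T * Mm Q * Ed T)
      = Bk (Mm Q) T k - Bk (Mm Q) T (k + 1) := by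
    intro k
    rw [mul_sub, Bk_mul_E, Bk_mul_EME]
  ext i j
  have hsum : ∀ m j', Summable fun k => Bk (Mm Q) T k m j' := fun m j' =>
    Bk_summable hQ hoff T m j'
  rw [Matrix.mul_apply]
  have e2 : (∑ m, Lmat Q T i m * (Ed T - Ed T * Mm Q * Ed T) m j)
      = ∑ m, ∑' k, Bk (Mm Q) T k i m * (Ed T - Ed T * Mm Q * Ed T) m j :=
    Finset.sum_congr rfl fun m _ => by rw [Lmat_apply, tsum_mul_right]
  have hsum2 : ∀ m ∈ Finset.univ, Summable fun k =>
      Bk (Mm Q) T k i m * (Ed T - Ed T * Mm Q * Ed T) m j :=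
    fun m _ => (hsum i m).mul_right _
  have e3 : (∑ m, ∑' k, Bk (Mm Q) T k i m * (Ed T - Ed T * Mm Q * Ed T) m j)
      = ∑' k, ∑ m, Bk (Mm Q) T k i m * (Ed T - Ed T * Mm Q * Ed T) m j :=
    (Summable.tsum_finsetSum hsum2).symm
  have e4 : ∀ k : ℕ, (∑ m, Bk (Mm Q) T k i m * (Ed T - Ed T * Mm Q * Ed T) m j)
      = Bk (Mm Q) T k i j - Bk (Mm Q) T (k + 1) i j := by
    intro k
    rw [← Matrix.mul_apply, hX k, Matrix.sub_apply]
  have e5 : (∑' k : ℕ, (Bk (Mm Q) T k i j - Bk (Mm Q) T (k + 1) i j)) = Bk (Mm Q) T 0 i j := by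
    rw [Summable.tsum_sub (hsum i j) ((summable_nat_add_iff 1).mpr (hsum i j))]
    have := Summable.tsum_eq_zero_add (hsum i j)
    linarith
  rw [e2, e3, tsum_congr e4, e5, Bk_zero_eq]

lemma L_support (T : Finset (Fin n)) (i j : Fin n) (hi : i ∉ T) : Lmat Q T i j = 0 := by
  rw [Lmat_apply]
  have h0 : ∀ k, Bk (Mm Q) T k i j = 0 := by
    intro k
    rw [Bk, Ed_mul_apply, if_neg hi, zero_mul]
  rw [tsum_congr h0, tsum_zero]

end QPart2


section QPart3
variable {n : ℕ} {Q : Matrix (Fin n) (Fin n) ℝ}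

lemma mask_apply (Q : Matrix (Fin n) (Fin n) ℝ) (S : Finset (Fin n)) (i j : Fin n) :
    mask Q S i j = if i ∈ S ∧ j ∈ S then Q i j else 0 := rfl

lemma sqrt_ne (hQ : Q.PosDef) (i : Fin n) : Real.sqrt (Q i i) ≠ 0 :=
  (Real.sqrt_pos.mpr (diag_pos hQ i)).ne'

lemma Dg_Dgi (hQ : Q.PosDef) : Dg Q * Dgi Q = 1 := by
  rw [Dg, Dgi, diagonal_mul_diagonal]
  have : (fun i => Real.sqrt (Q i i) * (Real.sqrt (Q i i))⁻¹) = fun _ => (1:ℝ) := by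
    funext i
    rw [mul_inv_cancel₀ (sqrt_ne hQ i)]
  rw [this, diagonal_one]

lemma Dgi_Dg (hQ : Q.PosDef) : Dgi Q * Dg Q = 1 := by
  rw [Dg, Dgi, diagonal_mul_diagonal]
  have : (fun i => (Real.sqrt (Q i i))⁻¹ * Real.sqrt (Q i i)) = fun _ => (1:ℝ) := by
    funext i
    rw [inv_mul_cancel₀ (sqrt_ne hQ i)]
  rw [this, diagonal_one]

lemma DgEDgi (hQ : Q.PosDef) (T : Finset (Fin n)) : Dg Q * Ed T * Dgi Q = Ed T := by
  rw [Dg, Dgi, Ed, diagonal_mul_diagonal, diagonal_mul_diagonal]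
  have : (fun i => Real.sqrt (Q i i) * (if i ∈ T then (1:ℝ) else 0) * (Real.sqrt (Q i i))⁻¹)
      = fun i => if i ∈ T then (1:ℝ) else 0 := by
    funext i
    split_ifs with h
    · rw [mul_one, mul_inv_cancel₀ (sqrt_ne hQ i)]
    · rw [mul_zero, zero_mul]
  rw [this]

lemma DgiEDg (hQ : Q.PosDef) (T : Finset (Fin n)) : Dgi Q * Ed T * Dg Q = Ed T := by
  rw [Dg, Dgi, Ed, diagonal_mul_diagonal, diagonal_mul_diagonal]
  have : (fun i => (Real.sqrt (Q i i))⁻¹ * (if i ∈ T then (1:ℝ) else 0) * Real.sqrt (Q i i))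
      = fun i => if i ∈ T then (1:ℝ) else 0 := by
    funext i
    split_ifs with h
    · rw [mul_one, inv_mul_cancel₀ (sqrt_ne hQ i)]
    · rw [mul_zero, zero_mul]
  rw [this]

lemma EME_apply (T : Finset (Fin n)) (i j : Fin n) :
    (Ed T * Mm Q * Ed T) i j
      = (if i ∈ T then 1 else 0) * Mm Q i j * (if j ∈ T then 1 else 0) := by
  rw [Ed, mul_diagonal, diagonal_mul]

lemma decomp (hQ : Q.PosDef) (T : Finset (Fin n)) :
    mask Q T = Dg Q * (Ed T - Ed T * Mm Q * Ed T) * Dg Q := by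
  ext i j
  rw [mask_apply]
  rw [show Dg Q * (Ed T - Ed T * Mm Q * Ed T) * Dg Q
      = Matrix.diagonal (fun i => Real.sqrt (Q i i)) * (Ed T - Ed T * Mm Q * Ed T)
        * Matrix.diagonal (fun i => Real.sqrt (Q i i)) from rfl]
  rw [mul_diagonal, diagonal_mul, Matrix.sub_apply, EME_apply]
  rw [show Ed T i j = if i = j then (if i ∈ T then (1:ℝ) else 0) else 0 from by
    rw [Ed, diagonal_apply]]
  rw [Mm_apply]
  by_cases hij : i = j
  · subst hij
    by_cases hiT : i ∈ T
    · rw [if_pos rfl, if_pos ⟨hiT, hiT⟩, if_pos hiT, if_pos rfl]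
      rw [mul_zero, zero_mul, sub_zero, mul_one]
      rw [Real.mul_self_sqrt (diag_pos hQ i).le]
    · simp [hiT]
  · rw [if_neg hij, if_neg hij]
    by_cases hiT : i ∈ T
    · by_cases hjT : j ∈ T
      · rw [if_pos ⟨hiT, hjT⟩, if_pos hiT, if_pos hjT]
        rw [one_mul, mul_one, zero_sub]
        rw [div_eq_mul_inv, mul_inv]
        have hi := sqrt_ne hQ i
        have hj := sqrt_ne hQ j
        field_simp
      · rw [if_neg (fun h => hjT h.2), if_neg hjT]
        simp
    · rw [if_neg (fun h => hiT h.1), if_neg hiT]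
      simp

lemma Pmat_apply (Q : Matrix (Fin n) (Fin n) ℝ) (T : Finset (Fin n)) (i j : Fin n) :
    Pmat Q T i j = (Real.sqrt (Q i i))⁻¹ * Lmat Q T i j * (Real.sqrt (Q j j))⁻¹ := by
  rw [show Pmat Q T = Matrix.diagonal (fun i => (Real.sqrt (Q i i))⁻¹) * Lmat Q T
      * Matrix.diagonal (fun i => (Real.sqrt (Q i i))⁻¹) from rfl]
  rw [mul_diagonal, diagonal_mul]

lemma E_mul_mask (T : Finset (Fin n)) : Ed T * mask Q T = mask Q T := by
  ext i j
  rw [Ed_mul_apply]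
  by_cases hiT : i ∈ T
  · rw [if_pos hiT, one_mul]
  · rw [if_neg hiT, zero_mul, mask_apply, if_neg (fun h : i ∈ T ∧ j ∈ T => hiT h.1)]

lemma E_mul_Pmat (T : Finset (Fin n)) : Ed T * Pmat Q T = Pmat Q T := by
  ext i j
  rw [Ed_mul_apply]
  by_cases hiT : i ∈ T
  · rw [if_pos hiT, one_mul]
  · rw [if_neg hiT, zero_mul, Pmat_apply, L_support T i j hiT, mul_zero, zero_mul]

lemma mask_mul_P (hQ : Q.PosDef) [Nonempty (Fin n)]
    (hoff : ∀ i j : Fin n, i ≠ j → Q i j ≤ 0) (T : Finset (Fin n)) :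
    mask Q T * Pmat Q T = Ed T := by
  rw [decomp hQ T, Pmat]
  have h1 : Dg Q * (Ed T - Ed T * Mm Q * Ed T) * Dg Q * (Dgi Q * Lmat Q T * Dgi Q)
      = Dg Q * ((Ed T - Ed T * Mm Q * Ed T) * ((Dg Q * Dgi Q) * (Lmat Q T * Dgi Q))) := by
    simp only [mul_assoc]
  rw [h1, Dg_Dgi hQ, one_mul, ← mul_assoc (Ed T - Ed T * Mm Q * Ed T) (Lmat Q T) (Dgi Q),
    sub_mul_L hQ hoff T, ← mul_assoc, DgEDgi hQ]

lemma P_mul_mask (hQ : Q.PosDef) [Nonempty (Fin n)]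
    (hoff : ∀ i j : Fin n, i ≠ j → Q i j ≤ 0) (T : Finset (Fin n)) :
    Pmat Q T * mask Q T = Ed T := by
  rw [decomp hQ T, Pmat]
  have h1 : Dgi Q * Lmat Q T * Dgi Q * (Dg Q * (Ed T - Ed T * Mm Q * Ed T) * Dg Q)
      = Dgi Q * (Lmat Q T * ((Dgi Q * Dg Q) * ((Ed T - Ed T * Mm Q * Ed T) * Dg Q))) := by
    simp only [mul_assoc]
  rw [h1, Dgi_Dg hQ, one_mul, ← mul_assoc (Lmat Q T) (Ed T - Ed T * Mm Q * Ed T) (Dg Q),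
    L_mul_sub hQ hoff T, ← mul_assoc, DgiEDg hQ]

lemma pinv_mask (hQ : Q.PosDef) [Nonempty (Fin n)]
    (hoff : ∀ i j : Fin n, i ≠ j → Q i j ≤ 0) (T : Finset (Fin n)) :
    pinv (mask Q T) = Pmat Q T := by
  have hAP := mask_mul_P hQ hoff T
  have hPA := P_mul_mask hQ hoff T
  refine pinv_eq_of _ _ ?_ ?_ ?_ ?_
  · rw [hAP, E_mul_mask]
  · rw [hPA, E_mul_Pmat]
  · rw [hAP, Ed_transpose]
  · rw [hPA, Ed_transpose]

lemma Pmat_empty (i j : Fin n) : Pmat Q (∅ : Finset (Fin n)) i j = 0 := by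
  rw [Pmat_apply, L_support ∅ i j (Finset.notMem_empty i), mul_zero, zero_mul]

lemma Pmat_apply' (Q : Matrix (Fin n) (Fin n) ℝ) (T : Finset (Fin n)) (i j : Fin n) :
    Pmat Q T i j = ((Real.sqrt (Q i i))⁻¹ * (Real.sqrt (Q j j))⁻¹) * Lmat Q T i j := by
  rw [Pmat_apply]; ring

lemma P_inc [Nonempty (Fin n)] (hQ : Q.PosDef)
    (hoff : ∀ i j : Fin n, i ≠ j → Q i j ≤ 0) (A B : Finset (Fin n)) (hAB : A ⊆ B)
    (e : Fin n) (he : e ∉ B) (i j : Fin n) :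
    Pmat Q (insert e A) i j + Pmat Q B i j ≤ Pmat Q (insert e B) i j + Pmat Q A i j := by
  have hs : ∀ T : Finset (Fin n), Summable fun k => Bk (Mm Q) T k i j := fun T =>
    Bk_summable hQ hoff T i j
  have hL : Lmat Q (insert e A) i j + Lmat Q B i j
      ≤ Lmat Q (insert e B) i j + Lmat Q A i j := by
    rw [Lmat_apply, Lmat_apply, Lmat_apply, Lmat_apply,
      ← Summable.tsum_add (hs (insert e A)) (hs B), ← Summable.tsum_add (hs (insert e B)) (hs A)]
    exact Summable.tsum_le_tsum
      (fun k => Bk_superadd (Mm_nonneg hQ hoff) A B hAB e he k i j)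
      ((hs (insert e A)).add (hs B)) ((hs (insert e B)).add (hs A))
  rw [Pmat_apply', Pmat_apply', Pmat_apply', Pmat_apply', ← mul_add, ← mul_add]
  refine mul_le_mul_of_nonneg_left hL ?_
  positivity

end QPart3


section SkLemmas
variable {n : ℕ}

lemma Sk_zero (π : Equiv.Perm (Fin n)) : Sk π 0 = ∅ := by
  ext x
  simp [Sk]

lemma Sk_succ (π : Equiv.Perm (Fin n)) (m : ℕ) (hm : m < n) :
    Sk π (m + 1) = insert (π ⟨m, hm⟩) (Sk π m) := by
  rw [Sk, Sk]
  have hfil : (Finset.univ.filter fun i : Fin n => (i : ℕ) < m + 1)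
      = insert ⟨m, hm⟩ (Finset.univ.filter fun i : Fin n => (i : ℕ) < m) := by
    ext x
    simp only [Finset.mem_filter, Finset.mem_univ, true_and, Finset.mem_insert]
    rw [Nat.lt_succ_iff_lt_or_eq]
    constructor
    · rintro (h | h)
      · exact Or.inr h
      · exact Or.inl (Fin.ext h)
    · rintro (h | h)
      · exact Or.inr (by rw [h])
      · exact Or.inl h
  rw [hfil, Finset.image_insert]

lemma pik_not_mem (π : Equiv.Perm (Fin n)) (m : ℕ) (hm : m < n) :
    π ⟨m, hm⟩ ∉ Sk π m := by
  rw [Sk]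
  simp only [Finset.mem_image, Finset.mem_filter, Finset.mem_univ, true_and]
  rintro ⟨a, ha, hπ⟩
  have haa : a = ⟨m, hm⟩ := π.injective hπ
  subst haa
  exact Nat.lt_irrefl m ha

lemma Sk_univ (π : Equiv.Perm (Fin n)) : Sk π n = Finset.univ := by
  ext x
  simp only [Sk, Finset.mem_image, Finset.mem_filter, Finset.mem_univ, true_and, iff_true]
  exact ⟨π.symm x, (π.symm x).2, π.apply_symm_apply x⟩

end SkLemmas

/-- validity of the polymatroid inequalities at binary points: for a Stieltjes
matrix `Q`, a permutation `π`, and `z ∈ {0,1}ⁿ`, entrywise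
`(Q ∘ z zᵀ)† ≤ ∑_k z_{π_k} R(π_k; S_{k-1}^π)`. -/
theorem stmt15 {n : ℕ} (Q : Matrix (Fin n) (Fin n) ℝ)
    (hQ : Q.PosDef) (hoff : ∀ i j : Fin n, i ≠ j → Q i j ≤ 0)
    (π : Equiv.Perm (Fin n)) (z : Fin n → ℝ) (hz : ∀ i, z i = 0 ∨ z i = 1) :
    ∀ i j : Fin n,
      pinv (Matrix.of fun i j => Q i j * (z i * z j)) i j ≤
        ∑ k : Fin n, z (π k) * Rinc Q π k i j := by
  intro i j
  haveI : Nonempty (Fin n) := ⟨i⟩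
  set S₀ : Finset (Fin n) := Finset.univ.filter fun a => z a = 1 with hS₀
  have hS₀mem : ∀ a, a ∈ S₀ ↔ z a = 1 := by intro a; simp [hS₀]
  have hmask : (Matrix.of fun i j => Q i j * (z i * z j)) = mask Q S₀ := by
    ext a b
    simp only [Matrix.of_apply, mask_apply]
    by_cases ha : z a = 1
    · by_cases hb : z b = 1
      · rw [ha, hb, if_pos ⟨(hS₀mem a).mpr ha, (hS₀mem b).mpr hb⟩]; ring
      · have hb0 : z b = 0 := (hz b).resolve_right hb
        rw [hb0, if_neg (fun h => hb ((hS₀mem b).mp h.2))]; ring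
    · have ha0 : z a = 0 := (hz a).resolve_right ha
      rw [ha0, if_neg (fun h => ha ((hS₀mem a).mp h.1))]; ring
  rw [hmask, pinv_mask hQ hoff S₀]
  have hR : ∀ k : Fin n, Rinc Q π ↑k i j
      = Pmat Q (Sk π (↑k + 1)) i j - Pmat Q (Sk π ↑k) i j := by
    intro k
    rw [Rinc, Matrix.sub_apply, pinv_mask hQ hoff, pinv_mask hQ hoff]
  have main : ∀ m : ℕ, m ≤ n → Pmat Q (S₀ ∩ Sk π m) i j
      ≤ ∑ k ∈ Finset.univ.filter (fun k : Fin n => (k : ℕ) < m),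
          z (π k) * (Pmat Q (Sk π (↑k + 1)) i j - Pmat Q (Sk π ↑k) i j) := by
    intro m
    induction m with
    | zero =>
        intro _
        have h1 : Sk π 0 = ∅ := Sk_zero π
        have h2 : (Finset.univ.filter fun k : Fin n => (k : ℕ) < 0) = ∅ := by
          ext k; simp
        rw [h1, Finset.inter_empty, h2, Finset.sum_empty, Pmat_empty]
    | succ m ih =>
        intro hm1
        have hm : m < n := Nat.lt_of_succ_le hm1
        set km : Fin n := ⟨m, hm⟩ with hkm
        have hv : (km : ℕ) = m := rfl
        have hfil : (Finset.univ.filter fun k : Fin n => (k : ℕ) < m + 1)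
            = insert km (Finset.univ.filter fun k : Fin n => (k : ℕ) < m) := by
          ext x
          simp only [Finset.mem_filter, Finset.mem_univ, true_and, Finset.mem_insert]
          rw [Nat.lt_succ_iff_lt_or_eq]
          constructor
          · rintro (h | h)
            · exact Or.inr h
            · exact Or.inl (Fin.ext h)
          · rintro (h | h)
            · exact Or.inr (by rw [h])
            · exact Or.inl h
        have hnotin : km ∉ Finset.univ.filter fun k : Fin n => (k : ℕ) < m := by
          simp [hkm]
        rw [hfil, Finset.sum_insert hnotin, hv]
        have hSk1 : Sk π (m + 1) = insert (π km) (Sk π m) := Sk_succ π m hm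
        have hπnot : π km ∉ Sk π m := pik_not_mem π m hm
        have ihm := ih (Nat.le_of_succ_le hm1)
        rcases hz (π km) with h0 | h1
        · have hnS : π km ∉ S₀ := fun h => by
            rw [hS₀mem] at h
            rw [h0] at h
            norm_num at h
          have hint : S₀ ∩ Sk π (m + 1) = S₀ ∩ Sk π m := by
            rw [hSk1, Finset.inter_comm, Finset.insert_inter_of_notMem hnS, Finset.inter_comm]
          rw [hint, h0, zero_mul, zero_add]
          exact ihm
        · have hπS : π km ∈ S₀ := (hS₀mem _).mpr h1
          have hint : S₀ ∩ Sk π (m + 1) = insert (π km) (S₀ ∩ Sk π m) := by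
            rw [hSk1, Finset.inter_insert_of_mem hπS]
          have hinc := P_inc hQ hoff (S₀ ∩ Sk π m) (Sk π m) Finset.inter_subset_right
            (π km) hπnot i j
          rw [hint, h1, one_mul, hSk1]
          linarith [hinc, ihm]
  have hfin := main n (le_refl n)
  have h1 : S₀ ∩ Sk π n = S₀ := by rw [Sk_univ, Finset.inter_univ]
  have h2 : (Finset.univ.filter fun k : Fin n => (k : ℕ) < n) = Finset.univ :=
    Finset.filter_true_of_mem fun k _ => k.2
  rw [h1, h2] at hfin
  calc Pmat Q S₀ i j
      ≤ ∑ k : Fin n, z (π k) * (Pmat Q (Sk π (↑k + 1)) i j - Pmat Q (Sk π ↑k) i j) := hfin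
  _ = ∑ k : Fin n, z (π k) * Rinc Q π ↑k i j := by
      refine Finset.sum_congr rfl fun k _ => ?_
      rw [hR k]
end

section
/- Let Q be an n×n Stieltjes matrix with inverse Q⁻¹ = V V⊤ where V is the (upper-triangular, with respect to the order of a permutation π of [n]) Cholesky-type factor, with columns v_1, …, v_n such that (v_k)_{π_i} = 0 for i > k. Then for each k, v_k v_k⊤ = R(π_k; S_{k-1}^π), i.e., the rank-one increments of the restricted inverses along the chain S_0^π ⊂ S_1^π ⊂ … ⊂ S_n^π are exactly the outer products of the columns of V. -/
open Matrix
open scoped Classical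

lemma pinv_unique {m : Type*} [Fintype m] [DecidableEq m] (A B : Matrix m m ℝ)
    (h1 : A * B * A = A) (h2 : B * A * B = B) (h3 : (A * B)ᵀ = A * B)
    (h4 : (B * A)ᵀ = B * A) : pinv A = B := by
  have hex : ∃ C : Matrix m m ℝ,
      A * C * A = A ∧ C * A * C = C ∧ (A * C)ᵀ = A * C ∧ (C * A)ᵀ = C * A :=
    ⟨B, h1, h2, h3, h4⟩
  rw [pinv, dif_pos hex]
  obtain ⟨c1, c2, c3, c4⟩ := hex.choose_spec
  set C := hex.choose with hC
  have hAC : A * C = A * B := by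
    calc A * C = (A * B * A) * C := by rw [h1]
    _ = (A * B) * (A * C) := by rw [Matrix.mul_assoc (A*B) A C]
    _ = (A * B)ᵀ * (A * C)ᵀ := by rw [h3, c3]
    _ = Bᵀ * ((A * C * A)ᵀ) := by
        simp only [Matrix.transpose_mul, Matrix.mul_assoc]
    _ = Bᵀ * Aᵀ := by rw [c1]
    _ = (A * B)ᵀ := by rw [Matrix.transpose_mul]
    _ = A * B := h3
  have hCA : C * A = B * A := by
    calc C * A = C * (A * B * A) := by rw [h1]
    _ = (C * A) * (B * A) := by simp only [Matrix.mul_assoc]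
    _ = (C * A)ᵀ * (B * A)ᵀ := by rw [c4, h4]
    _ = (A * C * A)ᵀ * Bᵀ := by
        simp only [Matrix.transpose_mul, Matrix.mul_assoc]
    _ = Aᵀ * Bᵀ := by rw [c1]
    _ = (B * A)ᵀ := by rw [Matrix.transpose_mul]
    _ = B * A := h4
  calc C = C * A * C := c2.symm
  _ = C * (A * B) := by rw [Matrix.mul_assoc, hAC]
  _ = (B * A) * B := by rw [← Matrix.mul_assoc, hCA]
  _ = B := h2



lemma mem_Sk {n : ℕ} (π : Equiv.Perm (Fin n)) (k : ℕ) (i : Fin n) :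
    i ∈ Sk π k ↔ ((π.symm i : Fin n) : ℕ) < k := by
  simp only [Sk, Finset.mem_image, Finset.mem_filter, Finset.mem_univ, true_and]
  constructor
  · rintro ⟨a, ha, rfl⟩; simpa using ha
  · intro h; exact ⟨π.symm i, h, by simp⟩

section main
variable {n : ℕ} (Q : Matrix (Fin n) (Fin n) ℝ) (π : Equiv.Perm (Fin n))
  (V : Matrix (Fin n) (Fin n) ℝ)

noncomputable def Msum (K : ℕ) : Matrix (Fin n) (Fin n) ℝ :=

  ∑ j ∈ Finset.univ.filter (fun j : Fin n => (j : ℕ) < K),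
    vecMulVec (fun i => V i j) (fun i => V i j)

variable {Q π V}

lemma key_facts (hQ : Q.PosDef) (hV : Q⁻¹ = V * Vᵀ)
    (htri : ∀ k i : Fin n, k < i → V (π i) k = 0) :
    (∀ i j : Fin n, ((π.symm i : Fin n) : ℕ) < (j : ℕ) → (Q * V) i j = 0) ∧
      Q * V * Vᵀ = 1 := by
  have hdetQ : IsUnit Q.det := isUnit_iff_ne_zero.2 (ne_of_gt hQ.det_pos)
  have hdetQi : IsUnit (Q⁻¹).det := (Matrix.isUnit_nonsing_inv_det Q hdetQ)
  have hdetV : IsUnit V.det := by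
    have : IsUnit (V.det * V.det) := by
      have := hdetQi
      rw [hV, Matrix.det_mul, Matrix.det_transpose] at this
      exact this
    exact isUnit_of_mul_isUnit_left this
  -- W = V.submatrix π id  is upper triangular
  set W : Matrix (Fin n) (Fin n) ℝ := V.submatrix π id with hW
  have hWtri : W.BlockTriangular (id : Fin n → Fin n) := by
    intro i j hij
    exact htri j i hij
  have hdetW : IsUnit W.det := by
    rw [hW, Matrix.det_permute]
    exact (IsUnit.mul_iff.2 ⟨(Int.isUnit_iff.1 (Equiv.Perm.sign π).isUnit).elim
      (fun h => by simp [h]) (fun h => by simp [h]), hdetV⟩)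
  haveI : Invertible W := W.invertibleOfIsUnitDet hdetW
  have hWinvtri : (W⁻¹).BlockTriangular (id : Fin n → Fin n) :=
    Matrix.blockTriangular_inv_of_blockTriangular hWtri
  -- V⁻¹ = W⁻¹.submatrix id π.symm
  have hVinv : V⁻¹ = (W⁻¹).submatrix id π.symm := by
    apply Matrix.inv_eq_left_inv
    ext j m
    simp only [Matrix.mul_apply, Matrix.submatrix_apply, id_eq]
    rw [← Equiv.sum_comp π (fun i => W⁻¹ j (π.symm i) * V i m)]
    simp only [Equiv.symm_apply_apply]
    have : ∀ i, W⁻¹ j i * V (π i) m = W⁻¹ j i * W i m := by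
      intro i; rw [hW]; rfl
    rw [Finset.sum_congr rfl (fun i _ => this i)]
    have := Matrix.nonsing_inv_mul W hdetW
    have := congrFun (congrFun this j) m
    simpa [Matrix.mul_apply] using this
  have hQV : Q * V = (V⁻¹)ᵀ := by
    have hQ' : Q = (Vᵀ)⁻¹ * V⁻¹ := by
      have := Matrix.nonsing_inv_nonsing_inv Q hdetQ
      rw [hV] at this
      rw [← this, Matrix.mul_inv_rev]
    rw [hQ', Matrix.mul_assoc, Matrix.nonsing_inv_mul V hdetV, Matrix.mul_one,
      Matrix.transpose_nonsing_inv]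
  constructor
  · intro i j hij
    rw [hQV]
    show (V⁻¹) j i = 0
    rw [hVinv]
    show W⁻¹ j (π.symm i) = 0
    exact hWinvtri hij
  · rw [Matrix.mul_assoc, ← hV, Matrix.mul_nonsing_inv Q hdetQ]

end main


section t3
variable {n : ℕ} {Q : Matrix (Fin n) (Fin n) ℝ} {π : Equiv.Perm (Fin n)}
  {V : Matrix (Fin n) (Fin n) ℝ}

-- support of Msum
lemma Msum_apply_eq_zero (htri : ∀ k i : Fin n, k < i → V (π i) k = 0)
    (K : ℕ) (i l : Fin n) (h : ¬ ((π.symm i : Fin n) : ℕ) < K) :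
    Msum V K i l = 0 := by
  unfold Msum
  rw [Matrix.sum_apply]
  apply Finset.sum_eq_zero
  intro j hj
  simp only [Finset.mem_filter, Finset.mem_univ, true_and] at hj
  have hji : j < π.symm i := by
    have : (j : ℕ) < ((π.symm i : Fin n) : ℕ) := lt_of_lt_of_le hj (le_of_not_gt h)
    exact this
  have : V i j = 0 := by
    have := htri j (π.symm i) hji
    simpa using this
  simp [vecMulVec_apply, this]

lemma Msum_symm (K : ℕ) : (Msum V K)ᵀ = Msum V K := by
  unfold Msum
  rw [Matrix.transpose_sum]
  apply Finset.sum_congr rfl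
  intro j _
  ext i l
  simp [vecMulVec_apply, mul_comm]

lemma QMsum (hQ : Q.PosDef) (hV : Q⁻¹ = V * Vᵀ)
    (htri : ∀ k i : Fin n, k < i → V (π i) k = 0) (K : ℕ)
    (i l : Fin n) (hi : ((π.symm i : Fin n) : ℕ) < K) :
    (Q * Msum V K) i l = (1 : Matrix (Fin n) (Fin n) ℝ) i l := by
  obtain ⟨hz, hQVVt⟩ := key_facts hQ hV htri
  have expand : (Q * Msum V K) i l
      = ∑ j ∈ Finset.univ.filter (fun j : Fin n => (j : ℕ) < K),
          (Q * V) i j * V l j := by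
    unfold Msum
    rw [Matrix.mul_sum, Matrix.sum_apply]
    apply Finset.sum_congr rfl
    intro j _
    rw [Matrix.mul_apply]
    simp only [vecMulVec_apply]
    rw [Matrix.mul_apply, Finset.sum_mul]
    apply Finset.sum_congr rfl
    intro m _
    ring
  rw [expand]
  rw [Finset.sum_subset (Finset.subset_univ _)]
  · have := congrFun (congrFun hQVVt i) l
    rw [← this, Matrix.mul_apply]
    apply Finset.sum_congr rfl
    intro j _
    rfl
  · intro j _ hj
    simp only [Finset.mem_filter, Finset.mem_univ, true_and, not_lt] at hj
    rw [hz i j (lt_of_lt_of_le hi hj), zero_mul]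

lemma pinv_mask_eq (hQ : Q.PosDef) (hV : Q⁻¹ = V * Vᵀ)
    (htri : ∀ k i : Fin n, k < i → V (π i) k = 0) (K : ℕ) :
    pinv (mask Q (Sk π K)) = Msum V K := by
  set A := mask Q (Sk π K) with hA
  set B := Msum V K with hB
  set d : Fin n → ℝ := fun i => if ((π.symm i : Fin n) : ℕ) < K then 1 else 0 with hd
  have hQsymm : ∀ i j, Q j i = Q i j := by
    intro i j
    have := congrFun (congrFun hQ.isHermitian i) j
    simpa using this
  have hAsymm : Aᵀ = A := by
    ext i j
    simp only [Matrix.transpose_apply, hA, mask, Matrix.of_apply, and_comm]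
    split_ifs with h
    · exact hQsymm i j
    · rfl
  have hBz : ∀ i l, ¬ ((π.symm i : Fin n) : ℕ) < K → B i l = 0 :=
    fun i l h => Msum_apply_eq_zero htri K i l h
  have hBzc : ∀ i l, ¬ ((π.symm l : Fin n) : ℕ) < K → B i l = 0 := by
    intro i l h
    have h2 := hBz l i h
    have h3 := congrFun (congrFun (Msum_symm (V := V) (n := n) K) l) i
    exact h3.trans h2
  have hAB : A * B = Matrix.diagonal d := by
    ext i l
    rw [Matrix.mul_apply]
    by_cases hi : ((π.symm i : Fin n) : ℕ) < K
    · have : ∀ m, A i m * B m l = Q i m * B m l := by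
        intro m
        by_cases hm : ((π.symm m : Fin n) : ℕ) < K
        · simp [hA, mask, mem_Sk, hi, hm]
        · rw [hBz m l hm, mul_zero, mul_zero]
      rw [Finset.sum_congr rfl (fun m _ => this m)]
      have : ∑ m, Q i m * B m l = (Q * B) i l := (Matrix.mul_apply).symm
      rw [this, QMsum hQ hV htri K i l hi]
      simp only [Matrix.one_apply, Matrix.diagonal_apply, hd]
      by_cases h : i = l
      · subst h; simp [hi]
      · simp [h]
    · have : ∀ m, A i m * B m l = 0 := by
        intro m
        simp [hA, mask, mem_Sk, hi]
      rw [Finset.sum_congr rfl (fun m _ => this m), Finset.sum_const_zero]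
      simp only [Matrix.diagonal_apply, hd]
      by_cases h : i = l
      · subst h; simp [hi]
      · simp [h]
  have hBA : B * A = Matrix.diagonal d := by
    have hBsymm : Bᵀ = B := Msum_symm (V := V) (n := n) K
    calc B * A = (Aᵀ * Bᵀ)ᵀ := by
          rw [Matrix.transpose_mul, Matrix.transpose_transpose,
            Matrix.transpose_transpose]
    _ = (A * B)ᵀ := by rw [hAsymm, hBsymm]
    _ = (Matrix.diagonal d)ᵀ := by rw [hAB]
    _ = Matrix.diagonal d := Matrix.diagonal_transpose d
  apply pinv_unique
  · rw [hAB]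
    ext i l
    rw [Matrix.diagonal_mul]
    by_cases hi : ((π.symm i : Fin n) : ℕ) < K
    · simp [hd, hi]
    · have : A i l = 0 := by simp [hA, mask, mem_Sk, hi]
      simp [hd, hi, this]
  · rw [hBA]
    ext i l
    rw [Matrix.diagonal_mul]
    by_cases hi : ((π.symm i : Fin n) : ℕ) < K
    · simp [hd, hi]
    · simp [hd, hi, hBz i l hi]
  · rw [hAB, Matrix.diagonal_transpose]
  · rw [hBA, Matrix.diagonal_transpose]

end t3


/-- if `Q⁻¹ = V Vᵀ` with `V` upper triangular with respect to the order given by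
the permutation `π` (i.e., `V (π i) k = 0` whenever `i > k`), then the outer product of the
`k`-th column of `V` with itself equals the increment `R(π_k; S_{k-1}^π)` of the restricted
pseudoinverses along the chain `S_0^π ⊂ S_1^π ⊂ … ⊂ S_n^π`. -/
theorem stmt17 {n : ℕ} (Q : Matrix (Fin n) (Fin n) ℝ)
    (hQ : Q.PosDef) (hoff : ∀ i j : Fin n, i ≠ j → Q i j ≤ 0)
    (π : Equiv.Perm (Fin n)) (V : Matrix (Fin n) (Fin n) ℝ)
    (hV : Q⁻¹ = V * Vᵀ)
    (htri : ∀ k i : Fin n, k < i → V (π i) k = 0) :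
    ∀ k : Fin n, vecMulVec (fun i => V i k) (fun i => V i k) = Rinc Q π k := by
  intro k
  rw [Rinc, pinv_mask_eq hQ hV htri, pinv_mask_eq hQ hV htri]
  unfold Msum
  have hset : (Finset.univ.filter fun j : Fin n => (j : ℕ) < (k : ℕ) + 1)
      = insert k (Finset.univ.filter fun j : Fin n => (j : ℕ) < (k : ℕ)) := by
    ext j
    simp only [Finset.mem_filter, Finset.mem_univ, true_and, Finset.mem_insert,
      Nat.lt_succ_iff, le_iff_lt_or_eq, Fin.ext_iff]
    tauto
  rw [hset, Finset.sum_insert (by simp)]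
  abel
end
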